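/- Let Z, I₀ be as in the context. Then for all r ∈ I₀, r·(d/dr)[Z'(r)·Z(r)^{−(m+1)}·P̂(Z(r))] = (m+1)·Z'(r)·Z(r)^{−(m+2)}·P̂(Z(r)) − Z'(r)·Z(r)^{−(m+1)}·P̂(Z(r)); equivalently, r·(d/dr)[Z'·Z^{−(m+1)}·P̂(Z)] / (Z'·Z^{−(m+1)}·P̂(Z)) = −1 + (m+1)·Z(r)^{−1} on I₀. -/

import Mathlib

open Polynomial Set

/-- Lemma 3.3 of the paper: the logarithmic-derivative identity
for Z'·Z^{-(m+1)}·P̂(Z) on I₀ = I ∩ (0,1). -/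
theorem stmt_2 (m : ℕ) (hm : 2 ≤ m)
    (P Q Phat Qhat : Polynomial ℝ)
    (hPmon : P.Monic) (hPdeg : P.natDegree = m - 1)
    (hQ : ∀ y : ℝ, (derivative Q).eval y = ((m : ℝ) + 1) * y * P.eval y)
    (hPhat : ∀ x : ℝ, x ≠ 0 → Phat.eval x = x ^ (m - 1) * P.eval (1 / x))
    (hQhat : ∀ x : ℝ, x ≠ 0 → Qhat.eval x = x ^ (m + 1) * Q.eval (1 / x))
    (a b : ℝ) (ha : 0 ≤ a) (h1 : (1 : ℝ) ∈ Ioo a b)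
    (Z : ℝ → ℝ) (hZan : AnalyticOnNhd ℝ Z (Ioo a b))
    (hODE : ∀ r ∈ Ioo a b, r * deriv Z r * Phat.eval (Z r) + Qhat.eval (Z r) = 0)
    (hZ1 : Z 1 = 0)
    (hZ' : ∀ r ∈ Ioo a b, deriv Z r < 0)
    (hPZ : ∀ r ∈ Ioo a b, 0 < Phat.eval (Z r))
    (hZpos : ∀ r ∈ Ioo a b ∩ Ioo (0 : ℝ) 1, 0 < Z r) :
    ∀ r ∈ Ioo a b ∩ Ioo (0 : ℝ) 1,
      (r * deriv (fun s => deriv Z s * Z s ^ (-((m : ℤ) + 1)) * Phat.eval (Z s)) r =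
        ((m : ℝ) + 1) * deriv Z r * Z r ^ (-((m : ℤ) + 2)) * Phat.eval (Z r)
          - deriv Z r * Z r ^ (-((m : ℤ) + 1)) * Phat.eval (Z r)) ∧
      (r * deriv (fun s => deriv Z s * Z s ^ (-((m : ℤ) + 1)) * Phat.eval (Z s)) r /
          (deriv Z r * Z r ^ (-((m : ℤ) + 1)) * Phat.eval (Z r)) =
        -1 + ((m : ℝ) + 1) * (Z r)⁻¹) := by
  obtain ⟨k, rfl⟩ : ∃ k, m = k + 1 := ⟨m - 1, by omega⟩
  have hpow1 : ∀ x : ℝ, x ^ (-((↑(k+1) : ℤ) + 1)) = (x ^ (k+2))⁻¹ := by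
    intro x
    rw [show -((↑(k+1) : ℤ) + 1) = -((k+2 : ℕ) : ℤ) by push_cast; ring, zpow_neg, zpow_natCast]
  have hpow2 : ∀ x : ℝ, x ^ (-((↑(k+1) : ℤ) + 2)) = (x ^ (k+3))⁻¹ := by
    intro x
    rw [show -((↑(k+1) : ℤ) + 2) = -((k+3 : ℕ) : ℤ) by push_cast; ring, zpow_neg, zpow_natCast]
  intro r hr
  obtain ⟨hrab, hr01⟩ := hr
  have hrpos : 0 < r := hr01.1
  have hZr : 0 < Z r := hZpos r ⟨hrab, hr01⟩
  have hUopen : IsOpen (Ioo a b ∩ Ioo (0:ℝ) 1) := isOpen_Ioo.inter isOpen_Ioo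
  have key : ∀ s ∈ Ioo a b ∩ Ioo (0:ℝ) 1,
      deriv Z s * Z s ^ (-((↑(k+1) : ℤ) + 1)) * Phat.eval (Z s)
      = -(Q.eval ((Z s)⁻¹)) / s := by
    intro s hs
    have hs0 : (0:ℝ) < s := hs.2.1
    have hZs : 0 < Z s := hZpos s hs
    have hODEs := hODE s hs.1
    have hQh := hQhat (Z s) hZs.ne'
    rw [one_div] at hQh
    rw [hpow1]
    field_simp
    simp only [one_div]
    linear_combination hODEs - hQh
  have hEq : (fun s => deriv Z s * Z s ^ (-((↑(k+1) : ℤ) + 1)) * Phat.eval (Z s))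
      =ᶠ[nhds r] (fun s => -(Q.eval ((Z s)⁻¹)) / s) :=
    Filter.eventuallyEq_of_mem (hUopen.mem_nhds ⟨hrab, hr01⟩) key
  have hZd : HasDerivAt Z (deriv Z r) r := (hZan r hrab).differentiableAt.hasDerivAt
  have hinv : HasDerivAt (fun s => (Z s)⁻¹) (-(deriv Z r) / (Z r)^2) r := hZd.inv hZr.ne'
  have hQc : HasDerivAt (fun s => Q.eval ((Z s)⁻¹))
      ((derivative Q).eval ((Z r)⁻¹) * (-(deriv Z r) / (Z r)^2)) r :=
    by have hQa := Q.hasDerivAt ((Z r)⁻¹); exact hQa.comp r hinv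
  have hg : HasDerivAt (fun s => -(Q.eval ((Z s)⁻¹)) / s)
      (((-((derivative Q).eval ((Z r)⁻¹) * (-(deriv Z r) / (Z r)^2))) * r
        - (-(Q.eval ((Z r)⁻¹))) * 1) / r^2) r :=
    hQc.neg.div (hasDerivAt_id r) hrpos.ne'
  have hderiv : deriv (fun s => deriv Z s * Z s ^ (-((↑(k+1) : ℤ) + 1)) * Phat.eval (Z s)) r
      = ((-((derivative Q).eval ((Z r)⁻¹) * (-(deriv Z r) / (Z r)^2))) * r
        - (-(Q.eval ((Z r)⁻¹))) * 1) / r^2 := by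
    rw [hEq.deriv_eq, hg.deriv]
  -- facts at r
  have hQd := hQ ((Z r)⁻¹)
  have hPv := hPhat (Z r) hZr.ne'
  rw [one_div] at hPv
  have hQv : Q.eval ((Z r)⁻¹) * Z r ^ (k+2) = -(r * deriv Z r * Phat.eval (Z r)) := by
    have hQh := hQhat (Z r) hZr.ne'
    rw [one_div] at hQh
    linear_combination hODE r hrab - hQh
  have hZne : Z r ≠ 0 := hZr.ne'
  have hrne : r ≠ 0 := hrpos.ne'
  have hmk : ((↑(k+1) : ℝ)) = (k : ℝ) + 1 := by push_cast; ring
  have hsub : (k + 1) - 1 = k := by omega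
  rw [hsub] at hPv
  have first : r * deriv (fun s => deriv Z s * Z s ^ (-((↑(k+1) : ℤ) + 1)) * Phat.eval (Z s)) r =
      ((↑(k+1) : ℝ) + 1) * deriv Z r * Z r ^ (-((↑(k+1) : ℤ) + 2)) * Phat.eval (Z r)
        - deriv Z r * Z r ^ (-((↑(k+1) : ℤ) + 1)) * Phat.eval (Z r) := by
    have hq1 : (derivative Q).eval ((Z r)⁻¹) * Z r
        = ((k : ℝ) + 2) * P.eval ((Z r)⁻¹) := by
      rw [hQd]; push_cast; field_simp; ring
    rw [hderiv, hpow1, hpow2, hmk]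
    field_simp
    simp only [one_div]
    push_cast
    linear_combination (r * deriv Z r * Z r^(2*k+4)) * hq1
      + (-((k : ℝ) + 2) * r * deriv Z r * Z r^(k+4)) * hPv
      + (Z r^(k+5)) * hQv
  refine ⟨first, ?_⟩
  have hFne : deriv Z r * Z r ^ (-((↑(k+1) : ℤ) + 1)) * Phat.eval (Z r) ≠ 0 := by
    have h1 := (hZ' r hrab).ne
    have h2 := (hPZ r hrab).ne'
    rw [hpow1]
    positivity
  rw [first]
  rw [hpow1, hpow2] at *
  field_simp [(hZ' r hrab).ne, (hPZ r hrab).ne']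
  ring
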